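/- Comparison of a geometric log-concave function with its level-set body: let f = e^{−φ} ∈ LC_g(ℝⁿ) and K_f = {x : f(x) > e^{−n}}. Then C^{−n} ∫ f ≤ Vol(K_f) ≤ C^{n} ∫ f for a universal constant C > 1. In particular ∫_0^∞ e^{−t} Vol{φ ≤ t} dt = ∫ f, and Vol{φ ≤ t} ≤ (t/n)ⁿ Vol(K_f) for t ≥ n. -/

import Mathlib

open MeasureTheory ENNReal NNReal Pointwise

noncomputable section

/-- The ambient space `ℝⁿ`. -/
abbrev Vn (n : ℕ) := EuclideanSpace ℝ (Fin n)

/-- Convolution of a (nonnegative Borel) measure with a `[0,∞]`-valued function: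
`(μ * g)(x) = ∫ g(x - t) dμ(t)`. -/
def mconv {n : ℕ} (μ : Measure (Vn n)) (g : Vn n → ℝ≥0∞) (x : Vn n) : ℝ≥0∞ :=
  ∫⁻ t, g (x - t) ∂μ

/-- `μ` is a covering measure of `f` by `g` : `μ * g ≥ f` pointwise. -/
def Covers {n : ℕ} (μ : Measure (Vn n)) (g f : Vn n → ℝ≥0∞) : Prop :=
  ∀ x, f x ≤ mconv μ g x

/-- `ρ` is a `g`-separated measure with respect to `h` : `ρ * g ≤ h` pointwise. -/
def Separated {n : ℕ} (ρ : Measure (Vn n)) (g h : Vn n → ℝ≥0∞) : Prop :=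
  ∀ x, mconv ρ g x ≤ h x

/-- The `h`-covering number of `f` by `g`:
`N(f,g,h) = inf {∫ h dμ : μ * g ≥ f}`. -/
def covN {n : ℕ} (f g h : Vn n → ℝ≥0∞) : ℝ≥0∞ :=
  ⨅ μ : {μ : Measure (Vn n) // Covers μ g f}, ∫⁻ x, h x ∂μ.1

/-- The `h`-separation number of `f` by `g`:
`M(f,g,h) = sup {∫ f dρ : ρ * g ≤ h}`. -/
def sepM {n : ℕ} (f g h : Vn n → ℝ≥0∞) : ℝ≥0∞ :=
  ⨆ ρ : {ρ : Measure (Vn n) // Separated ρ g h}, ∫⁻ x, f x ∂ρ.1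

open Set Filter in
private lemma lsvc_image_exp_neg : (fun t : ℝ => Real.exp (-t)) '' Set.Ioi (0:ℝ) = Set.Ioo 0 1 := by
  ext s
  constructor
  · rintro ⟨t, ht, rfl⟩
    exact ⟨Real.exp_pos _, Real.exp_lt_one_iff.mpr (by simpa using (Set.mem_Ioi.mp ht))⟩
  · rintro ⟨hs0, hs1⟩
    refine ⟨-Real.log s, ?_, by simp [Real.exp_log hs0]⟩
    simpa using Real.log_neg hs0 hs1

open Set Filter in
private lemma lsvc_change_of_variables (g : ℝ → ℝ≥0∞) :
    ∫⁻ s in Set.Ioo (0:ℝ) 1, g s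
      = ∫⁻ t in Set.Ioi (0:ℝ), ENNReal.ofReal (Real.exp (-t)) * g (Real.exp (-t)) := by
  rw [← lsvc_image_exp_neg]
  rw [lintegral_image_eq_lintegral_abs_det_fderiv_mul volume measurableSet_Ioi
      (f' := fun t => (1 : ℝ →L[ℝ] ℝ).smulRight (-Real.exp (-t))) ?_ ?_ g]
  · refine setLIntegral_congr_fun measurableSet_Ioi (fun t _ => ?_)
    rw [ContinuousLinearMap.det_smulRight, ContinuousLinearMap.one_apply, one_mul, abs_neg, abs_of_pos (Real.exp_pos _)]
  · intro x _
    have h1 : HasDerivAt (fun t : ℝ => Real.exp (-t)) (Real.exp (-x) * (-1)) x :=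
      (hasDerivAt_neg x).exp
    have h2 : HasDerivAt (fun t : ℝ => Real.exp (-t)) (-Real.exp (-x)) x := by
      simpa [mul_comm] using h1
    exact h2.hasDerivWithinAt.hasFDerivWithinAt
  · intro a _ b _ h
    have := Real.exp_injective h
    linarith [neg_injective this]


/-- Comparison of a geometric log-concave function `f = e^{-φ}` with its level-set
body `K_f = {f > e^{-n}}`: there is a universal constant `C > 1` with
`C⁻ⁿ ∫ f ≤ Vol(K_f) ≤ Cⁿ ∫ f`; moreover the layer-cake identity
`∫_0^∞ e^{-t} Vol{φ ≤ t} dt = ∫ f` holds, and `Vol{φ ≤ t} ≤ (t/n)ⁿ Vol(K_f)` for `t ≥ n`. -/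
theorem level_set_volume_comparison :
    ∃ C : ℝ, 1 < C ∧ ∀ (n : ℕ), 1 ≤ n → ∀ f : Vn n → ℝ,
      UpperSemicontinuous f → (∀ x, 0 ≤ f x) → (∀ x, f x ≤ 1) → f 0 = 1 →
      (∀ x y : Vn n, ∀ t : ℝ, 0 ≤ t → t ≤ 1 →
        f x ^ t * f y ^ (1 - t) ≤ f (t • x + (1 - t) • y)) →
      0 < ∫⁻ x, ENNReal.ofReal (f x) → (∫⁻ x, ENNReal.ofReal (f x)) < ∞ →
      (ENNReal.ofReal (C⁻¹ ^ n) * ∫⁻ x, ENNReal.ofReal (f x) ≤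
          volume {x : Vn n | Real.exp (-(n : ℝ)) < f x} ∧
        volume {x : Vn n | Real.exp (-(n : ℝ)) < f x} ≤
          ENNReal.ofReal (C ^ n) * ∫⁻ x, ENNReal.ofReal (f x)) ∧
      (∫⁻ t in Set.Ioi (0 : ℝ),
          ENNReal.ofReal (Real.exp (-t)) * volume {x : Vn n | Real.exp (-t) ≤ f x} =
        ∫⁻ x, ENNReal.ofReal (f x)) ∧
      (∀ t : ℝ, (n : ℝ) ≤ t →
        volume {x : Vn n | Real.exp (-t) ≤ f x} ≤
          ENNReal.ofReal ((t / n) ^ n) * volume {x : Vn n | Real.exp (-(n : ℝ)) < f x}) := by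
  refine ⟨3, by norm_num, ?_⟩
  intro n hn f husc hf0 hf1 hfzero hlc hIpos hIfin
  have hn0 : (0:ℝ) < n := by exact_mod_cast hn
  set I := ∫⁻ x, ENNReal.ofReal (f x) with hI
  set K := {x : Vn n | Real.exp (-(n : ℝ)) < f x} with hK
  set V := volume K with hV
  have hmf : Measurable f := husc.measurable
  -- abbreviation for superlevel-set volumes
  set G : ℝ → ℝ≥0∞ := fun s => volume {x : Vn n | s ≤ f x} with hG
  -- Layer cake identity
  have hlayer : ∫⁻ t in Set.Ioi (0:ℝ),
      ENNReal.ofReal (Real.exp (-t)) * volume {x : Vn n | Real.exp (-t) ≤ f x} = I := by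
    have h1 : I = ∫⁻ s in Set.Ioi (0:ℝ), G s :=
      lintegral_eq_lintegral_meas_le volume (Filter.Eventually.of_forall hf0)
        hmf.aemeasurable
    have h2 : ∫⁻ s in Set.Ioi (0:ℝ), G s = ∫⁻ s in Set.Ioo (0:ℝ) 1, G s := by
      rw [← Set.Ioo_union_Ici_eq_Ioi (zero_lt_one (α := ℝ)),
        MeasureTheory.lintegral_union measurableSet_Ici
          ((Set.Iio_disjoint_Ici (le_refl (1:ℝ))).mono_left Set.Ioo_subset_Iio_self)]
      have h3 : ∫⁻ s in Set.Ici (1:ℝ), G s = ∫⁻ s in Set.Ioi (1:ℝ), G s :=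
        (setLIntegral_congr (MeasureTheory.Ioi_ae_eq_Ici (a := (1:ℝ)))).symm
      have h4 : ∫⁻ s in Set.Ioi (1:ℝ), G s = 0 := by
        rw [← MeasureTheory.lintegral_zero (μ := volume.restrict (Set.Ioi (1:ℝ)))]
        refine setLIntegral_congr_fun measurableSet_Ioi
          (fun s hs => ?_)
        have : {x : Vn n | s ≤ f x} = ∅ := by
          ext x
          simp only [Set.mem_setOf_eq, Set.mem_empty_iff_false, iff_false, not_le]
          exact lt_of_le_of_lt (hf1 x) hs
        simp [hG, this]
      rw [h3, h4, add_zero]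
    rw [h1, h2, lsvc_change_of_variables G]
  -- scaling estimate
  have hsub : ∀ t : ℝ, 0 ≤ t → ∀ s : ℝ, 0 < s → s ≤ 1 → s * t < n →
      {x : Vn n | Real.exp (-t) ≤ f x} ⊆ s⁻¹ • K := by
    intro t ht s hs0 hs1 hst x hx
    have hx' : Real.exp (-t) ≤ f x := hx
    have key : f x ^ s ≤ f (s • x) := by
      have := hlc x 0 s hs0.le hs1
      simpa [hfzero, Real.one_rpow] using this
    have h1 : Real.exp (-t) ^ s ≤ f x ^ s :=
      Real.rpow_le_rpow (Real.exp_pos _).le hx' hs0.le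
    have h2 : Real.exp (-t) ^ s = Real.exp (-(s * t)) := by
      rw [← Real.exp_mul]; ring_nf
    have h3 : Real.exp (-(n:ℝ)) < Real.exp (-(s * t)) :=
      Real.exp_lt_exp.mpr (by linarith)
    have hmem : s • x ∈ K := by
      have : Real.exp (-(n:ℝ)) < f (s • x) := by
        calc Real.exp (-(n:ℝ)) < Real.exp (-(s*t)) := h3
        _ = Real.exp (-t) ^ s := h2.symm
        _ ≤ f x ^ s := h1
        _ ≤ f (s • x) := key
      exact this
    refine Set.mem_smul_set.mpr ⟨s • x, hmem, ?_⟩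
    rw [smul_smul, inv_mul_cancel₀ hs0.ne', one_smul]
  have hvolsmul : ∀ s : ℝ, 0 < s →
      volume (s⁻¹ • K) = ENNReal.ofReal (s⁻¹ ^ n) * V := by
    intro s hs
    rw [MeasureTheory.Measure.addHaar_smul_of_nonneg volume (by positivity) K,
      finrank_euclideanSpace_fin]
  -- Claim 3
  have hclaim3 : ∀ t : ℝ, (n : ℝ) ≤ t →
      volume {x : Vn n | Real.exp (-t) ≤ f x} ≤
        ENNReal.ofReal ((t / n) ^ n) * V := by
    intro t ht
    have ht0 : (0:ℝ) < t := lt_of_lt_of_le hn0 ht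
    set r : ℝ := (n:ℝ) / t with hr
    have hr0 : 0 < r := div_pos hn0 ht0
    have hr1 : r ≤ 1 := by
      rw [hr, div_le_one ht0]; exact ht
    have hbound : ∀ s ∈ Set.Ioo (0:ℝ) r,
        volume {x : Vn n | Real.exp (-t) ≤ f x} ≤ ENNReal.ofReal (s⁻¹ ^ n) * V := by
      intro s hs
      have hst : s * t < n := by
        have := (mul_lt_mul_of_pos_right hs.2 ht0)
        rwa [hr, div_mul_cancel₀ _ ht0.ne'] at this
      calc volume {x : Vn n | Real.exp (-t) ≤ f x}
          ≤ volume (s⁻¹ • K) :=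
            measure_mono (hsub t ht0.le s hs.1 (le_trans hs.2.le hr1) hst)
        _ = ENNReal.ofReal (s⁻¹ ^ n) * V := hvolsmul s hs.1
    have htend : Filter.Tendsto (fun s : ℝ => ENNReal.ofReal (s⁻¹ ^ n) * V)
        (nhdsWithin r (Set.Iio r)) (nhds (ENNReal.ofReal ((t/n) ^ n) * V)) := by
      have hc : Filter.Tendsto (fun s : ℝ => ENNReal.ofReal (s⁻¹ ^ n))
          (nhdsWithin r (Set.Iio r)) (nhds (ENNReal.ofReal (r⁻¹ ^ n))) := by
        have : ContinuousAt (fun s : ℝ => ENNReal.ofReal (s⁻¹ ^ n)) r := by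
          exact ENNReal.continuous_ofReal.continuousAt.comp
            (((continuousAt_inv₀ hr0.ne').pow n))
        exact this.continuousWithinAt.tendsto
      have hrinv : r⁻¹ = t / n := by rw [hr, inv_div]
      have hne : ENNReal.ofReal (r⁻¹ ^ n) ≠ 0 := by
        simp only [ne_eq, ENNReal.ofReal_eq_zero, not_le]
        positivity
      have := ENNReal.Tendsto.mul_const (b := V) hc (Or.inl hne)
      rwa [hrinv] at this
    refine ge_of_tendsto htend ?_
    filter_upwards [Ioo_mem_nhdsLT_of_mem (Set.mem_Ioc.mpr ⟨hr0, le_refl r⟩)] with s hs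
    exact hbound s hs
  -- upper bound of claim 1
  have hupper : V ≤ ENNReal.ofReal ((3:ℝ) ^ n) * I := by
    have h1 : ENNReal.ofReal (Real.exp (-(n:ℝ))) * V ≤ I := by
      have h2 : ∫⁻ x in K, ENNReal.ofReal (Real.exp (-(n:ℝ))) ≤
          ∫⁻ x in K, ENNReal.ofReal (f x) :=
        setLIntegral_mono hmf.ennreal_ofReal fun x hx =>
          ENNReal.ofReal_le_ofReal (le_of_lt hx)
      calc ENNReal.ofReal (Real.exp (-(n:ℝ))) * V
          = ∫⁻ _ in K, ENNReal.ofReal (Real.exp (-(n:ℝ))) := by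
            rw [MeasureTheory.setLIntegral_const, hV]
        _ ≤ ∫⁻ x in K, ENNReal.ofReal (f x) := h2
        _ ≤ I := MeasureTheory.setLIntegral_le_lintegral _ _
    have h3 : V = ENNReal.ofReal (Real.exp ((n:ℝ))) *
        (ENNReal.ofReal (Real.exp (-(n:ℝ))) * V) := by
      rw [← mul_assoc, ← ENNReal.ofReal_mul (Real.exp_pos _).le, ← Real.exp_add]
      simp
    calc V = ENNReal.ofReal (Real.exp ((n:ℝ))) *
        (ENNReal.ofReal (Real.exp (-(n:ℝ))) * V) := h3
      _ ≤ ENNReal.ofReal (Real.exp ((n:ℝ))) * I := by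
          exact mul_le_mul_right h1 _
      _ ≤ ENNReal.ofReal ((3:ℝ) ^ n) * I := by
          refine mul_le_mul_left (ENNReal.ofReal_le_ofReal ?_) _
          rw [← Real.exp_one_pow]
          exact pow_le_pow_left₀ (Real.exp_pos 1).le
            (le_of_lt (lt_trans Real.exp_one_lt_d9 (by norm_num))) n
  -- lower bound of claim 1
  have hxle : ∀ u : ℝ, 1 ≤ u → u ≤ Real.exp (u / 2) := by
    intro u hu
    have hu0 : (0:ℝ) < u := lt_of_lt_of_le zero_lt_one hu
    have h1 : Real.log u ≤ u / 2 := by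
      have h2 : Real.log (Real.sqrt u) ≤ Real.sqrt u - 1 :=
        Real.log_le_sub_one_of_pos (Real.sqrt_pos.mpr hu0)
      have h3 : Real.log (Real.sqrt u) = Real.log u / 2 := Real.log_sqrt hu0.le
      nlinarith [sq_nonneg (Real.sqrt u - 2), Real.sq_sqrt hu0.le, Real.sqrt_nonneg u]
    calc u = Real.exp (Real.log u) := (Real.exp_log hu0).symm
      _ ≤ Real.exp (u / 2) := Real.exp_le_exp.mpr h1
  have hintbound : ∀ t ∈ Set.Ioi (0:ℝ),
      ENNReal.ofReal (Real.exp (-t)) * volume {x : Vn n | Real.exp (-t) ≤ f x} ≤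
        ENNReal.ofReal (Real.exp (-(t/2))) * V := by
    intro t ht
    have ht0 : (0:ℝ) < t := ht
    by_cases hcase : t < n
    · have hsubK : {x : Vn n | Real.exp (-t) ≤ f x} ⊆ K := by
        intro x hx
        exact lt_of_lt_of_le (Real.exp_lt_exp.mpr (by linarith)) hx
      refine mul_le_mul' (ENNReal.ofReal_le_ofReal (Real.exp_le_exp.mpr (by linarith)))
        (measure_mono hsubK)
    · push_neg at hcase
      have h1 := hclaim3 t hcase
      set u : ℝ := t / n with hu
      have hu1 : 1 ≤ u := (one_le_div hn0).mpr hcase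
      have hun : u * n = t := div_mul_cancel₀ t hn0.ne'
      have hkey : Real.exp (-t) * (t / n) ^ n ≤ Real.exp (-(t/2)) := by
        have e1 : Real.exp (-t) = Real.exp (-u) ^ n := by
          rw [← Real.exp_nat_mul]
          congr 1
          rw [mul_neg]
          rw [mul_comm]
          rw [hun]
        have e2 : Real.exp (-u) * u ≤ Real.exp (-(u/2)) := by
          have := hxle u hu1
          calc Real.exp (-u) * u ≤ Real.exp (-u) * Real.exp (u/2) :=
                mul_le_mul_of_nonneg_left this (Real.exp_pos _).le
            _ = Real.exp (-(u/2)) := by rw [← Real.exp_add]; ring_nf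
        have e3 : Real.exp (-(u/2)) ^ n = Real.exp (-(t/2)) := by
          rw [← Real.exp_nat_mul]
          congr 1
          field_simp
          linarith [hun]
        calc Real.exp (-t) * (t/n)^n = (Real.exp (-u) * u) ^ n := by
              rw [e1, ← hu, mul_pow]
          _ ≤ Real.exp (-(u/2)) ^ n :=
              pow_le_pow_left₀ (by positivity) e2 n
          _ = Real.exp (-(t/2)) := e3
      calc ENNReal.ofReal (Real.exp (-t)) * volume {x : Vn n | Real.exp (-t) ≤ f x}
          ≤ ENNReal.ofReal (Real.exp (-t)) * (ENNReal.ofReal ((t / n) ^ n) * V) :=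
            mul_le_mul_right h1 _
        _ = ENNReal.ofReal (Real.exp (-t) * (t / n) ^ n) * V := by
            rw [← mul_assoc, ← ENNReal.ofReal_mul (Real.exp_pos _).le]
        _ ≤ ENNReal.ofReal (Real.exp (-(t/2))) * V :=
            mul_le_mul_left (ENNReal.ofReal_le_ofReal hkey) _
  have hJ : ∫⁻ t in Set.Ioi (0:ℝ), ENNReal.ofReal (Real.exp (-(t/2))) =
      ENNReal.ofReal 2 := by
    have hint : MeasureTheory.IntegrableOn (fun t : ℝ => Real.exp (-(t/2)))
        (Set.Ioi (0:ℝ)) := by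
      have := exp_neg_integrableOn_Ioi (0:ℝ) (b := (1:ℝ)/2) (by norm_num)
      refine this.congr_fun (fun t _ => by ring_nf) measurableSet_Ioi
    rw [← MeasureTheory.ofReal_integral_eq_lintegral_ofReal hint
      (Filter.Eventually.of_forall fun t => (Real.exp_pos _).le)]
    congr 1
    have hderiv : ∀ x ∈ Set.Ici (0:ℝ),
        HasDerivAt (fun t : ℝ => (-2 : ℝ) * Real.exp (-(t/2))) (Real.exp (-(x/2))) x := by
      intro x _
      have h1 : HasDerivAt (fun t : ℝ => -(t/2)) (-(1/2) : ℝ) x := by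
        exact ((hasDerivAt_id x).div_const 2).neg
      have h2 := h1.exp
      have h3 := h2.const_mul (-2 : ℝ)
      exact h3.congr_deriv (by ring)
    have htends : Filter.Tendsto (fun t : ℝ => (-2 : ℝ) * Real.exp (-(t/2)))
        Filter.atTop (nhds 0) := by
      have h1 : Filter.Tendsto (fun t : ℝ => -(t/2)) Filter.atTop Filter.atBot := by
        exact Filter.tendsto_neg_atTop_atBot.comp (Filter.tendsto_id.atTop_div_const (by norm_num))
      have h2 := Real.tendsto_exp_atBot.comp h1
      have h3 := h2.const_mul (-2 : ℝ)
      simpa using h3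
    have := MeasureTheory.integral_Ioi_of_hasDerivAt_of_tendsto' hderiv hint htends
    rw [this]
    norm_num
  have hlow : I ≤ ENNReal.ofReal 2 * V := by
    calc I = ∫⁻ t in Set.Ioi (0:ℝ),
        ENNReal.ofReal (Real.exp (-t)) * volume {x : Vn n | Real.exp (-t) ≤ f x} :=
          hlayer.symm
      _ ≤ ∫⁻ t in Set.Ioi (0:ℝ), ENNReal.ofReal (Real.exp (-(t/2))) * V := by
          refine setLIntegral_mono ?_ hintbound
          exact ((Real.continuous_exp.comp (continuous_id.div_const 2).neg).measurable
            ).ennreal_ofReal.mul_const V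
      _ = (∫⁻ t in Set.Ioi (0:ℝ), ENNReal.ofReal (Real.exp (-(t/2)))) * V := by
          rw [MeasureTheory.lintegral_mul_const]
          exact ((Real.continuous_exp.comp (continuous_id.div_const 2).neg).measurable
            ).ennreal_ofReal
      _ = ENNReal.ofReal 2 * V := by rw [hJ]
  have hlower : ENNReal.ofReal ((3:ℝ)⁻¹ ^ n) * I ≤ V := by
    have h1 : ENNReal.ofReal ((3:ℝ)⁻¹ ^ n) ≤ ENNReal.ofReal ((2:ℝ)⁻¹) := by
      refine ENNReal.ofReal_le_ofReal ?_
      calc (3:ℝ)⁻¹ ^ n ≤ (3:ℝ)⁻¹ ^ 1 :=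
            pow_le_pow_of_le_one (by norm_num) (by norm_num) hn
        _ = (3:ℝ)⁻¹ := pow_one _
        _ ≤ (2:ℝ)⁻¹ := by norm_num
    calc ENNReal.ofReal ((3:ℝ)⁻¹ ^ n) * I ≤ ENNReal.ofReal ((2:ℝ)⁻¹) * I :=
          mul_le_mul_left h1 _
      _ ≤ ENNReal.ofReal ((2:ℝ)⁻¹) * (ENNReal.ofReal 2 * V) :=
          mul_le_mul_right hlow _
      _ = V := by
          rw [← mul_assoc, ← ENNReal.ofReal_mul (by norm_num)]
          norm_num
  exact ⟨⟨hlower, hupper⟩, hlayer, hclaim3⟩
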